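/- Let G = D_{2n} be the dihedral group of order 2n generated by elements a and b with ord(a) = n ≥ 2, ord(b) = 2 and bab⁻¹ = a⁻¹, and set G₀ = {ab, b}. Then B(G₀) is a saturated submonoid of the free abelian monoid F(G₀) (equivalently, B(G₀) is a Krull monoid) if and only if n is even. -/

import Mathlib

/-- `S` is a product-one sequence over `G`: some ordering of its terms multiplies to `1`. -/
def IsProductOne {G : Type*} [Group G] (S : Multiset G) : Prop :=
  ∃ l : List G, (l : Multiset G) = S ∧ l.prod = 1

/-- The set of products `π(S)` of all orderings of the terms of `S`. -/
def piSet {G : Type*} [Group G] (S : Multiset G) : Set G :=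
  {g | ∃ l : List G, (l : Multiset G) = S ∧ l.prod = g}

/-- The set `Π(S)` of products of nontrivial subsequences of `S`. -/
def subseqProds {G : Type*} [Group G] (S : Multiset G) : Set G :=
  {g | ∃ T : Multiset G, T ≤ S ∧ T ≠ 0 ∧ g ∈ piSet T}

/-- `S` is product-one free. -/
def ProductOneFree {G : Type*} [Group G] (S : Multiset G) : Prop :=
  (1 : G) ∉ subseqProds S

/-- `S` is an atom of the monoid `B(G)` of product-one sequences: it is a nontrivial
product-one sequence that is not the concatenation of two nontrivial product-one sequences. -/
def IsPOAtom {G : Type*} [Group G] (S : Multiset G) : Prop :=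
  IsProductOne S ∧ S ≠ 0 ∧
    ∀ T₁ T₂ : Multiset G, IsProductOne T₁ → IsProductOne T₂ → T₁ + T₂ = S →
      T₁ = 0 ∨ T₂ = 0

/-- The large Davenport constant `D(G)`: the supremum of lengths of atoms of `B(G)`. -/
noncomputable def largeD (G : Type*) [Group G] : ℕ :=
  sSup {n : ℕ | ∃ S : Multiset G, IsPOAtom S ∧ Multiset.card S = n}

/-- The small Davenport constant `d(G)`: the supremum of lengths of product-one free
sequences over `G`. -/
noncomputable def smalld (G : Type*) [Group G] : ℕ :=
  sSup {n : ℕ | ∃ S : Multiset G, ProductOneFree S ∧ Multiset.card S = n}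

section StmtAux

open Multiset DihedralGroup

private lemma pow_eq_one_of_even' {G : Type*} [Monoid G] {x : G} (hx : x * x = 1) {k : ℕ}
    (hk : Even k) : x ^ k = 1 := by
  obtain ⟨c, rfl⟩ := hk
  rw [← two_mul, pow_mul, pow_two, hx, one_pow]

private lemma decomp' {G : Type*} [DecidableEq G] {x y : G} (hxy : x ≠ y) {S : Multiset G}
    (h : ∀ z ∈ S, z = x ∨ z = y) :
    S = Multiset.replicate (S.count x) x + Multiset.replicate (S.count y) y := by
  ext a
  rw [count_add, count_replicate, count_replicate]
  by_cases hax : a = x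
  · subst hax; rw [if_pos rfl, if_neg (Ne.symm hxy), add_zero]
  · by_cases hay : a = y
    · subst hay; rw [if_pos rfl, if_neg hxy, zero_add]
    · have hns : a ∉ S := fun hm => by rcases h a hm with h' | h' <;> simp_all
      rw [if_neg (fun h' => hax h'.symm), if_neg (fun h' => hay h'.symm), add_zero,
        count_eq_zero.mpr hns]

/-- The parity-of-rotation-index homomorphism, for even `n`. -/
private def phiFun {n : ℕ} (h : (2 : ℕ) ∣ n) : DihedralGroup n → Multiplicative (ZMod 2)
  | .r i => Multiplicative.ofAdd (ZMod.castHom h (ZMod 2) i)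
  | .sr i => Multiplicative.ofAdd (ZMod.castHom h (ZMod 2) i)

private def phi {n : ℕ} (h : (2 : ℕ) ∣ n) : DihedralGroup n →* Multiplicative (ZMod 2) :=
  MonoidHom.mk' (phiFun h) (by
    rintro (i | i) (j | j) <;>
      simp only [phiFun, r_mul_r, r_mul_sr, sr_mul_r, sr_mul_sr, ← ofAdd_add] <;>
      congr 1 <;>
      simp [ZMod.castHom_apply, ZMod.cast_add h, ZMod.cast_sub h, CharTwo.sub_eq_add,
        add_comm])

/-- The sign homomorphism. -/
private def psiFun {n : ℕ} : DihedralGroup n → Multiplicative (ZMod 2)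
  | .r _ => 1
  | .sr _ => Multiplicative.ofAdd 1

private def psi (n : ℕ) : DihedralGroup n →* Multiplicative (ZMod 2) :=
  MonoidHom.mk' psiFun (by
    rintro (i | i) (j | j) <;>
      simp only [psiFun, r_mul_r, r_mul_sr, sr_mul_r, sr_mul_sr, mul_one, one_mul,
        ← ofAdd_add] <;> decide)

private lemma hom_eval {n : ℕ} {S : Multiset (DihedralGroup n)} {l : List (DihedralGroup n)}
    (hl : (l : Multiset (DihedralGroup n)) = S) (hp : l.prod = 1)
    (f : DihedralGroup n →* Multiplicative (ZMod 2)) :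
    (Multiset.map f S).prod = 1 := by
  rw [← hl]
  change ((l : Multiset (DihedralGroup n)).map f).prod = 1
  rw [Multiset.map_coe, Multiset.prod_coe, ← map_list_prod, hp, map_one]

private lemma even_of_pow {k : ℕ} (h : (Multiplicative.ofAdd (1 : ZMod 2)) ^ k = 1) :
    Even k := by
  rw [← ofAdd_nsmul, nsmul_eq_mul, mul_one] at h
  have : (k : ZMod 2) = 0 := by
    have := congrArg Multiplicative.toAdd h
    simpa using this
  rw [ZMod.natCast_eq_zero_iff] at this
  exact even_iff_two_dvd.mpr this

private lemma key_iff {n : ℕ} (hdvd : (2 : ℕ) ∣ n) (hne : (-1 : ZMod n) ≠ 0)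
    {S : Multiset (DihedralGroup n)}
    (hS : ∀ z ∈ S, z = sr (-1) ∨ z = sr 0) :
    IsProductOne S ↔
      Even (S.count (sr (-1 : ZMod n))) ∧ Even (S.count (sr (0 : ZMod n))) := by
  have hxy : (sr (-1 : ZMod n)) ≠ sr 0 := by simp [hne]
  set k := S.count (sr (-1 : ZMod n)) with hk
  set m := S.count (sr (0 : ZMod n)) with hm
  have hdec : S = Multiset.replicate k (sr (-1 : ZMod n)) + Multiset.replicate m (sr 0) :=
    decomp' hxy hS
  constructor
  · rintro ⟨l, hl, hp⟩
    have key : ∀ f : DihedralGroup n →* Multiplicative (ZMod 2),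
        f (sr (-1 : ZMod n)) ^ k * f (sr (0 : ZMod n)) ^ m = 1 := by
      intro f
      have h1 := hom_eval hl hp f
      rwa [hdec, Multiset.map_add, Multiset.map_replicate, Multiset.map_replicate,
        Multiset.prod_add, Multiset.prod_replicate, Multiset.prod_replicate] at h1
    have hkeven : Even k := by
      have h1 := key (phi hdvd)
      have hphix : phi hdvd (sr (-1 : ZMod n)) = Multiplicative.ofAdd (1 : ZMod 2) := by
        show Multiplicative.ofAdd (ZMod.castHom hdvd (ZMod 2) (-1 : ZMod n)) = _
        rw [map_neg, map_one]
        decide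
      have hphiy : phi hdvd (sr (0 : ZMod n)) = 1 := by
        show Multiplicative.ofAdd (ZMod.castHom hdvd (ZMod 2) (0 : ZMod n)) = 1
        simp
      rw [hphix, hphiy, one_pow, mul_one] at h1
      exact even_of_pow h1
    have hmeven : Even m := by
      have h1 := key (psi n)
      have hx : psi n (sr (-1 : ZMod n)) = Multiplicative.ofAdd (1 : ZMod 2) := rfl
      have hy : psi n (sr (0 : ZMod n)) = Multiplicative.ofAdd (1 : ZMod 2) := rfl
      rw [hx, hy, ← pow_add] at h1
      have := even_of_pow h1
      rw [Nat.even_add] at this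
      exact this.mp hkeven
    exact ⟨hkeven, hmeven⟩
  · rintro ⟨hkeven, hmeven⟩
    refine ⟨List.replicate k (sr (-1 : ZMod n)) ++ List.replicate m (sr 0), ?_, ?_⟩
    · rw [hdec, ← Multiset.coe_replicate, ← Multiset.coe_replicate, Multiset.coe_add]
    · rw [List.prod_append, List.prod_replicate, List.prod_replicate,
        pow_eq_one_of_even' (sr_mul_self _) hkeven,
        pow_eq_one_of_even' (sr_mul_self _) hmeven, one_mul]

private lemma coe_join_replicate {G : Type*} [DecidableEq G] (x y : G) (c : ℕ) :
    ((List.replicate c [x, y]).flatten : Multiset G)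
      = Multiset.replicate c x + Multiset.replicate c y := by
  induction c with
  | zero => rfl
  | succ c ih =>
    rw [List.replicate_succ, List.flatten_cons, ← Multiset.coe_add, ih,
      Multiset.replicate_succ, Multiset.replicate_succ]
    ext a
    show Multiset.count a ((x ::ₘ y ::ₘ 0) + _) = _
    simp only [Multiset.count_add, Multiset.count_cons, Multiset.count_replicate,
      Multiset.count_zero]
    split_ifs <;> omega

end StmtAux

theorem stmt8 (n : ℕ) (hn : 2 ≤ n) :
    (∀ S T : Multiset (DihedralGroup n),
        (∀ x ∈ S, x ∈ ({DihedralGroup.r 1 * DihedralGroup.sr 0, DihedralGroup.sr 0} :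
          Set (DihedralGroup n))) →
        (∀ x ∈ T, x ∈ ({DihedralGroup.r 1 * DihedralGroup.sr 0, DihedralGroup.sr 0} :
          Set (DihedralGroup n))) →
        IsProductOne S → IsProductOne T → T ≤ S → IsProductOne (S - T)) ↔
      Even n := by
  haveI : Fact (1 < n) := ⟨hn⟩
  have hone : (1 : ZMod n) ≠ 0 := one_ne_zero
  have hne : (-1 : ZMod n) ≠ 0 := fun h => hone (by rwa [neg_eq_zero] at h)
  have hx : DihedralGroup.r 1 * DihedralGroup.sr 0 = DihedralGroup.sr (-1 : ZMod n) := by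
    rw [DihedralGroup.r_mul_sr, zero_sub]
  constructor
  · intro hsat
    by_contra hodd
    rw [Nat.not_even_iff_odd] at hodd
    set x : DihedralGroup n := DihedralGroup.sr (-1 : ZMod n) with hxdef
    set y : DihedralGroup n := DihedralGroup.sr (0 : ZMod n) with hydef
    have hmem : ∀ c : ℕ, ∀ z ∈ (Multiset.replicate c x + Multiset.replicate c y),
        z ∈ ({DihedralGroup.r 1 * DihedralGroup.sr 0, DihedralGroup.sr 0} :
          Set (DihedralGroup n)) := by
      intro c z hz
      rw [hx]
      rcases Multiset.mem_add.mp hz with h | h <;>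
        simp [Multiset.eq_of_mem_replicate h, hydef]
    have hSone : IsProductOne (Multiset.replicate n x + Multiset.replicate n y) := by
      refine ⟨(List.replicate n [x, y]).flatten, coe_join_replicate x y n, ?_⟩
      rw [List.prod_flatten, List.map_replicate, List.prod_replicate]
      have h2 : ([x, y]).prod = DihedralGroup.r 1 := by
        simp [hxdef, hydef, DihedralGroup.sr_mul_sr]
      rw [h2, DihedralGroup.r_one_pow_n]
    have hTone : IsProductOne (Multiset.replicate (n-1) x + Multiset.replicate (n-1) y) := by
      refine ⟨List.replicate (n-1) x ++ List.replicate (n-1) y, ?_, ?_⟩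
      · rw [← Multiset.coe_replicate, ← Multiset.coe_replicate, Multiset.coe_add]
      · have hev : Even (n - 1) := Nat.Odd.sub_odd hodd odd_one
        rw [List.prod_append, List.prod_replicate, List.prod_replicate,
          pow_eq_one_of_even' (DihedralGroup.sr_mul_self _) hev,
          pow_eq_one_of_even' (DihedralGroup.sr_mul_self _) hev, one_mul]
    have hle : (Multiset.replicate (n-1) x + Multiset.replicate (n-1) y)
        ≤ (Multiset.replicate n x + Multiset.replicate n y) :=
      add_le_add ((Multiset.replicate_le_replicate x).mpr (Nat.sub_le n 1))
        ((Multiset.replicate_le_replicate y).mpr (Nat.sub_le n 1))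
    have hres := hsat _ _ (hmem n) (hmem (n-1)) hSone hTone hle
    have hsub : (Multiset.replicate n x + Multiset.replicate n y)
        - (Multiset.replicate (n-1) x + Multiset.replicate (n-1) y) = x ::ₘ {y} := by
      ext a
      rw [Multiset.count_sub]
      simp only [Multiset.count_add, Multiset.count_replicate, Multiset.count_cons,
        Multiset.count_singleton, eq_comm]
      split_ifs <;> omega
    rw [hsub] at hres
    obtain ⟨l, hl, hp⟩ := hres
    obtain ⟨p, q, rfl⟩ := List.length_eq_two.mp (by
      have := congrArg Multiset.card hl
      simpa using this)
    have hl' : (p ::ₘ {q} : Multiset (DihedralGroup n)) = x ::ₘ {y} := by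
      rw [← hl]; rfl
    have hp2 : p = x ∨ p = y := by
      have hpm : p ∈ (x ::ₘ ({y} : Multiset (DihedralGroup n))) := by
        rw [← hl']; exact Multiset.mem_cons_self p _
      simpa using hpm
    have hprod : p * q = 1 := by simpa using hp
    rcases hp2 with rfl | rfl
    · have hq : q = y := by
        have h3 := (Multiset.cons_inj_right x).mp hl'
        simpa using h3
      subst hq
      rw [hxdef, hydef, DihedralGroup.sr_mul_sr, DihedralGroup.one_def] at hprod
      have h4 : (0 : ZMod n) - (-1) = 0 := by injection hprod
      rw [sub_neg_eq_add, zero_add] at h4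
      exact hone h4
    · have hxyne : x ≠ y := by
        simp only [hxdef, hydef, ne_eq, DihedralGroup.sr.injEq]
        exact hne
      have hq : q = x := by
        have hxm : x ∈ (y ::ₘ ({q} : Multiset (DihedralGroup n))) := by
          rw [hl']; exact Multiset.mem_cons_self x _
        rcases Multiset.mem_cons.mp hxm with h3 | h3
        · exact absurd h3 hxyne
        · exact (Multiset.mem_singleton.mp h3).symm
      subst hq
      rw [hxdef, hydef, DihedralGroup.sr_mul_sr, DihedralGroup.one_def] at hprod
      have h4 : (-1 : ZMod n) - 0 = 0 := by injection hprod
      rw [sub_zero] at h4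
      exact hne h4
  · intro heven S T hSmem hTmem hS hT hle
    have hdvd : (2 : ℕ) ∣ n := heven.two_dvd
    rw [hx] at hSmem hTmem
    have hSmem' : ∀ z ∈ S, z = DihedralGroup.sr (-1 : ZMod n) ∨ z = DihedralGroup.sr 0 := by
      intro z hz; simpa using hSmem z hz
    have hTmem' : ∀ z ∈ T, z = DihedralGroup.sr (-1 : ZMod n) ∨ z = DihedralGroup.sr 0 := by
      intro z hz; simpa using hTmem z hz
    have hSTmem' : ∀ z ∈ S - T, z = DihedralGroup.sr (-1 : ZMod n) ∨ z = DihedralGroup.sr 0 :=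
      fun z hz => hSmem' z (Multiset.mem_of_le (Multiset.sub_le_self S T) hz)
    rw [key_iff hdvd hne hSmem'] at hS
    rw [key_iff hdvd hne hTmem'] at hT
    rw [key_iff hdvd hne hSTmem']
    constructor
    · rw [Multiset.count_sub]
      rw [Nat.even_sub (Multiset.count_le_of_le _ hle)]
      exact ⟨fun _ => hT.1, fun _ => hS.1⟩
    · rw [Multiset.count_sub]
      rw [Nat.even_sub (Multiset.count_le_of_le _ hle)]
      exact ⟨fun _ => hT.2, fun _ => hS.2⟩
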